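/- Let (X_1,...,X_n) have the MVG distribution with parameters \theta_I and let {l_1,...,l_s} be a nonempty subset of {1,...,n}. Then min(X_{l_1},...,X_{l_s}) is geometric with parameter 1 - \theta, where \theta = \prod_{I \subseteq {1,...,n}, I \cap {l_1,...,l_s} \ne \emptyset} \theta_I, and consequently its p-th factorial moment equals p! (\theta/(1-\theta))^p for every positive integer p (assuming \theta < 1). -/

import Mathlib

open MeasureTheory ProbabilityTheory
open scoped ENNReal

/-- The components of a multivariate geometric (MVG) vector: `X_i = min {M_I : I ∋ i}`. -/
noncomputable def mvgX {Ω : Type*} {n : ℕ}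
    (M : {I : Finset (Fin n) // I.Nonempty} → Ω → ℕ) (i : Fin n) (ω : Ω) : ℕ :=
  sInf {x | ∃ I : {I : Finset (Fin n) // I.Nonempty}, i ∈ I.1 ∧ M I ω = x}

lemma aux_measurable_inf' {Ω ι : Type*} [MeasurableSpace Ω] (s : Finset ι) (hs : s.Nonempty)
    (f : ι → Ω → ℕ) (hf : ∀ i, Measurable (f i)) :
    Measurable (fun ω => s.inf' hs (fun i => f i ω)) := by
  induction hs using Finset.Nonempty.cons_induction with
  | singleton a => simpa using hf a
  | cons a s h hs ih =>
      simp only [Finset.inf'_cons (H := hs)]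
      exact (hf a).min ih

lemma aux_mvgX_eq_inf' {Ω : Type*} {n : ℕ}
    (M : {I : Finset (Fin n) // I.Nonempty} → Ω → ℕ) (i : Fin n) (ω : Ω) :
    mvgX M i ω = (Finset.univ.filter
        (fun I : {I : Finset (Fin n) // I.Nonempty} => i ∈ I.1)).inf'
      ⟨⟨{i}, Finset.singleton_nonempty i⟩, by simp⟩ (fun I => M I ω) := by
  have hA : {x | ∃ I : {I : Finset (Fin n) // I.Nonempty}, i ∈ I.1 ∧ M I ω = x}.Nonempty :=
    ⟨M ⟨{i}, Finset.singleton_nonempty i⟩ ω, ⟨⟨{i}, Finset.singleton_nonempty i⟩, by simp, rfl⟩⟩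
  apply le_antisymm
  · obtain ⟨I₀, hI₀, hEq⟩ := Finset.exists_mem_eq_inf'
      (⟨⟨{i}, Finset.singleton_nonempty i⟩, by simp⟩ : (Finset.univ.filter
        (fun I : {I : Finset (Fin n) // I.Nonempty} => i ∈ I.1)).Nonempty) (fun I => M I ω)
    rw [hEq]
    exact Nat.sInf_le ⟨I₀, (Finset.mem_filter.mp hI₀).2, rfl⟩
  · obtain ⟨I, hiI, hMI⟩ := Nat.sInf_mem hA
    rw [mvgX, ← hMI]
    exact Finset.inf'_le _ (by simp [hiI])

lemma aux_S_nonempty {n : ℕ} (L : Finset (Fin n)) (hL : L.Nonempty) :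
    (Finset.univ.filter
      (fun I : {I : Finset (Fin n) // I.Nonempty} => (I.1 ∩ L).Nonempty)).Nonempty := by
  obtain ⟨i, hi⟩ := hL
  exact ⟨⟨{i}, Finset.singleton_nonempty i⟩, by
    simp only [Finset.mem_filter, Finset.mem_univ, true_and]
    exact ⟨i, by simp [hi]⟩⟩

lemma aux_min_eq {Ω : Type*} {n : ℕ}
    (M : {I : Finset (Fin n) // I.Nonempty} → Ω → ℕ)
    (L : Finset (Fin n)) (hL : L.Nonempty) (ω : Ω) :
    L.inf' hL (fun i => mvgX M i ω)
      = (Finset.univ.filter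
          (fun I : {I : Finset (Fin n) // I.Nonempty} => (I.1 ∩ L).Nonempty)).inf'
        (aux_S_nonempty L hL) (fun I => M I ω) := by
  apply le_antisymm
  · apply Finset.le_inf'
    intro I hI
    obtain ⟨i, hi⟩ := (Finset.mem_filter.mp hI).2
    have hi1 : i ∈ I.1 := Finset.mem_of_mem_inter_left hi
    have hi2 : i ∈ L := Finset.mem_of_mem_inter_right hi
    calc L.inf' hL (fun i => mvgX M i ω) ≤ mvgX M i ω := Finset.inf'_le _ hi2
    _ ≤ M I ω := by
        rw [aux_mvgX_eq_inf' M i ω]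
        exact Finset.inf'_le _ (by simp [hi1])
  · obtain ⟨i, hiL, hEq⟩ := Finset.exists_mem_eq_inf' hL (fun i => mvgX M i ω)
    rw [hEq, aux_mvgX_eq_inf' M i ω]
    obtain ⟨I, hI, hEq2⟩ := Finset.exists_mem_eq_inf'
      (⟨⟨{i}, Finset.singleton_nonempty i⟩, by simp⟩ : (Finset.univ.filter
        (fun I : {I : Finset (Fin n) // I.Nonempty} => i ∈ I.1)).Nonempty) (fun I => M I ω)
    rw [hEq2]
    exact Finset.inf'_le _ (by
      simp only [Finset.mem_filter, Finset.mem_univ, true_and]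
      exact ⟨i, Finset.mem_inter.mpr ⟨(Finset.mem_filter.mp hI).2, hiL⟩⟩)

lemma aux_prod_reindex {n : ℕ} (θ : Finset (Fin n) → ℝ≥0∞) (L : Finset (Fin n)) :
    ∏ I ∈ (Finset.univ.filter
        (fun I : {I : Finset (Fin n) // I.Nonempty} => (I.1 ∩ L).Nonempty)), θ I.1
      = ∏ I ∈ Finset.univ.powerset.filter
          (fun I : Finset (Fin n) => (I ∩ L).Nonempty), θ I := by
  apply Finset.prod_bij (fun I _ => I.1)
  · intro I hI
    simp only [Finset.mem_filter, Finset.mem_powerset]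
    exact ⟨Finset.subset_univ _, (Finset.mem_filter.mp hI).2⟩
  · intro a ha b hb h
    exact Subtype.ext h
  · intro J hJ
    have hJ2 : (J ∩ L).Nonempty := (Finset.mem_filter.mp hJ).2
    have hJne : J.Nonempty := by
      obtain ⟨x, hx⟩ := hJ2
      exact ⟨x, Finset.mem_of_mem_inter_left hx⟩
    exact ⟨⟨J, hJne⟩, by simpa using hJ2, rfl⟩
  · intro I hI; rfl

lemma aux_tsum_choose (p : ℕ) (x : ℝ≥0∞) (hx : x < 1) :
    ∑' m : ℕ, (((m + p).choose p : ℕ) : ℝ≥0∞) * x ^ m = ((1 - x) ^ (p + 1))⁻¹ := by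
  have hxt : x ≠ ∞ := (hx.trans ENNReal.one_lt_top).ne
  set r := x.toReal with hrdef
  have hr0 : 0 ≤ r := ENNReal.toReal_nonneg
  have hr1 : r < 1 := by
    rw [hrdef, show (1:ℝ) = (1:ℝ≥0∞).toReal by simp]
    exact (ENNReal.toReal_lt_toReal hxt (by simp)).mpr hx
  have hofr : ENNReal.ofReal r = x := ENNReal.ofReal_toReal hxt
  have hR : HasSum (fun m : ℕ => ((m + p).choose p : ℝ) * r ^ m) (1 / (1 - r) ^ (p + 1)) :=
    hasSum_choose_mul_geometric_of_norm_lt_one p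
      (by rwa [Real.norm_eq_abs, abs_of_nonneg hr0])
  have h1 := ENNReal.ofReal_tsum_of_nonneg
      (f := fun m : ℕ => ((m + p).choose p : ℝ) * r ^ m)
      (fun m => mul_nonneg (Nat.cast_nonneg _) (pow_nonneg hr0 m)) hR.summable
  have h2 : ∀ m : ℕ, ENNReal.ofReal (((m + p).choose p : ℝ) * r ^ m)
      = (((m + p).choose p : ℕ) : ℝ≥0∞) * x ^ m := by
    intro m
    rw [ENNReal.ofReal_mul (Nat.cast_nonneg _), ENNReal.ofReal_pow hr0, hofr,
      ENNReal.ofReal_natCast]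
  rw [hR.tsum_eq] at h1
  simp only [h2] at h1
  rw [← h1]
  have h1r : ENNReal.ofReal (1 - r) = 1 - x := by
    rw [ENNReal.ofReal_sub _ hr0, hofr, ENNReal.ofReal_one]
  rw [one_div, ENNReal.ofReal_inv_of_pos (pow_pos (by linarith) _),
    ENNReal.ofReal_pow (by linarith), h1r]

lemma aux_tsum_descFactorial (p : ℕ) (x : ℝ≥0∞) (hx : x < 1) :
    ∑' y : ℕ, ((y.descFactorial p : ℕ) : ℝ≥0∞) * x ^ y
      = (p.factorial : ℝ≥0∞) * x ^ p * ((1 - x) ^ (p + 1))⁻¹ := by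
  have hshift : ∑' m : ℕ, (((m + p).descFactorial p : ℕ) : ℝ≥0∞) * x ^ (m + p)
      = ∑' y : ℕ, ((y.descFactorial p : ℕ) : ℝ≥0∞) * x ^ y := by
    have hinj : Function.Injective (fun m : ℕ => m + p) := fun a b h => by
      simpa using h
    apply hinj.tsum_eq (f := fun y : ℕ => ((y.descFactorial p : ℕ) : ℝ≥0∞) * x ^ y)
    intro y hy
    simp only [Function.mem_support, ne_eq, mul_eq_zero, not_or] at hy
    have : ¬ (y < p) := fun h => hy.1 (by
      rw [Nat.descFactorial_eq_zero_iff_lt.mpr h]; simp)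
    exact ⟨y - p, show y - p + p = y by omega⟩
  rw [← hshift]
  have hterm : ∀ m : ℕ, (((m + p).descFactorial p : ℕ) : ℝ≥0∞) * x ^ (m + p)
      = ((p.factorial : ℝ≥0∞) * x ^ p) * ((((m + p).choose p : ℕ) : ℝ≥0∞) * x ^ m) := by
    intro m
    rw [Nat.descFactorial_eq_factorial_mul_choose, pow_add]
    push_cast
    ring
  simp only [hterm]
  rw [ENNReal.tsum_mul_left, aux_tsum_choose p x hx, mul_assoc]

/-- `min(X_{l_1},...,X_{l_s})` is geometric with parameter `1 - θ` where
`θ = ∏_{I : I ∩ L ≠ ∅} θ_I`; consequently its `p`-th factorial moment is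
`p! (θ/(1-θ))^p` (assuming `θ < 1`). -/
theorem stmt16 {Ω : Type*} [MeasurableSpace Ω] (μ : Measure Ω) [IsProbabilityMeasure μ]
    {n : ℕ} (θ : Finset (Fin n) → ℝ≥0∞) (hθ : ∀ I, θ I ≤ 1)
    (M : {I : Finset (Fin n) // I.Nonempty} → Ω → ℕ)
    (hM : ∀ I, Measurable (M I))
    (hindep : iIndepFun M μ)
    (hgeo : ∀ (I : {I : Finset (Fin n) // I.Nonempty}) (k : ℕ),
      μ {ω | k < M I ω} = θ I.1 ^ (k + 1))
    (hnondef : ∀ i : Fin n, ∃ I : Finset (Fin n), i ∈ I ∧ θ I < 1)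
    (L : Finset (Fin n)) (hL : L.Nonempty) :
    (∀ k : ℕ,
      μ {ω | k < L.inf' hL fun i => mvgX M i ω}
        = (∏ I ∈ Finset.univ.powerset.filter
              (fun I : Finset (Fin n) => (I ∩ L).Nonempty), θ I) ^ (k + 1))
    ∧ ((∏ I ∈ Finset.univ.powerset.filter
            (fun I : Finset (Fin n) => (I ∩ L).Nonempty), θ I) < 1 →
        ∀ p : ℕ, 1 ≤ p →
          ∫⁻ ω, (((∏ j ∈ Finset.range p, ((L.inf' hL fun i => mvgX M i ω) - j)) : ℕ) : ℝ≥0∞) ∂μ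
            = (p.factorial : ℝ≥0∞) *
              ((∏ I ∈ Finset.univ.powerset.filter
                  (fun I : Finset (Fin n) => (I ∩ L).Nonempty), θ I) /
               (1 - ∏ I ∈ Finset.univ.powerset.filter
                  (fun I : Finset (Fin n) => (I ∩ L).Nonempty), θ I)) ^ p) := by
  classical
  set S := Finset.univ.filter
    (fun I : {I : Finset (Fin n) // I.Nonempty} => (I.1 ∩ L).Nonempty) with hSdef
  have hS : S.Nonempty := aux_S_nonempty L hL
  set x := ∏ I ∈ Finset.univ.powerset.filter
    (fun I : Finset (Fin n) => (I ∩ L).Nonempty), θ I with hxdef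
  have hprod : ∏ I ∈ S, θ I.1 = x := aux_prod_reindex θ L
  set Y := fun ω => L.inf' hL fun i => mvgX M i ω with hYdef
  have hYeq : ∀ ω, (L.inf' hL fun i => mvgX M i ω) = Y ω := fun _ => rfl
  have hYmeas : Measurable Y := by
    have : Y = fun ω => S.inf' hS (fun I => M I ω) := funext (aux_min_eq M L hL)
    rw [this]
    exact aux_measurable_inf' S hS _ hM
  have hmineq : ∀ ω, Y ω = S.inf' hS (fun I => M I ω) := aux_min_eq M L hL
  have part1 : ∀ k : ℕ, μ {ω | k < Y ω} = x ^ (k + 1) := by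
    intro k
    have hset : {ω | k < Y ω} = ⋂ I ∈ S, M I ⁻¹' {y | k < y} := by
      ext ω
      simp only [Set.mem_setOf_eq, Set.mem_iInter, Set.mem_preimage, hmineq,
        Finset.lt_inf'_iff]
    rw [hset, hindep.meas_biInter (fun I _ => ⟨{y | k < y}, trivial, rfl⟩)]
    have : ∀ I ∈ S, μ (M I ⁻¹' {y | k < y}) = θ I.1 ^ (k + 1) := fun I _ => hgeo I k
    rw [Finset.prod_congr rfl this, Finset.prod_pow, hprod]
  refine ⟨part1, ?_⟩
  intro hx p hp
  have hxt : x ≠ ∞ := (hx.trans ENNReal.one_lt_top).ne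
  have ha0 : (1 - x) ≠ 0 := by
    simp only [ne_eq, tsub_eq_zero_iff_le, not_le]
    exact hx
  have hat : (1 - x) ≠ ∞ := (tsub_le_self.trans_lt ENNReal.one_lt_top).ne
  have hle : ∀ y : ℕ, μ {ω | y ≤ Y ω} = x ^ y := by
    intro y
    cases y with
    | zero =>
        have : {ω | 0 ≤ Y ω} = Set.univ := by ext ω; simp
        rw [this, measure_univ, pow_zero]
    | succ m =>
        have : {ω | m + 1 ≤ Y ω} = {ω | m < Y ω} := by
          ext ω; simp only [Set.mem_setOf_eq]; omega
        rw [this, part1 m]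
  have hpmf : ∀ y : ℕ, μ {ω | Y ω = y} = x ^ y * (1 - x) := by
    intro y
    have hmeas2 : MeasurableSet {ω | y < Y ω} := hYmeas (by trivial : MeasurableSet {m | y < m})
    have hsplit : μ {ω | Y ω = y} + μ {ω | y < Y ω} = μ {ω | y ≤ Y ω} := by
      rw [← measure_union ?hd hmeas2]
      · congr 1
        ext ω
        simp only [Set.mem_union, Set.mem_setOf_eq]
        omega
      case hd =>
        rw [Set.disjoint_left]
        intro ω h1 h2
        simp only [Set.mem_setOf_eq] at h1 h2
        omega
    rw [part1 y, hle y] at hsplit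
    rw [ENNReal.eq_sub_of_add_eq (ENNReal.pow_ne_top hxt) hsplit, pow_succ,
      ENNReal.mul_sub (fun _ _ => ENNReal.pow_ne_top hxt), mul_one]
  simp only [hYeq, ← Nat.descFactorial_eq_prod_range]
  rw [← lintegral_map (f := fun y : ℕ => ((y.descFactorial p : ℕ) : ℝ≥0∞)) (g := Y)
    (measurable_of_countable _) hYmeas, lintegral_countable']
  have hsum : ∑' y : ℕ, (((y.descFactorial p : ℕ) : ℝ≥0∞)) * (μ.map Y) {y}
      = ∑' y : ℕ, (((y.descFactorial p : ℕ) : ℝ≥0∞) * x ^ y) * (1 - x) := by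
    apply tsum_congr
    intro y
    rw [Measure.map_apply hYmeas (MeasurableSet.singleton y),
      show Y ⁻¹' {y} = {ω | Y ω = y} from rfl, hpmf y, mul_assoc]
  rw [hsum, ENNReal.tsum_mul_right, aux_tsum_descFactorial p x hx]
  have hkey : ((1 - x) ^ (p + 1))⁻¹ * (1 - x) = ((1 - x) ^ p)⁻¹ := by
    rw [pow_succ, ENNReal.mul_inv (Or.inr hat) (Or.inr ha0), mul_assoc,
      ENNReal.inv_mul_cancel ha0 hat, mul_one]
  rw [mul_assoc, hkey, div_eq_mul_inv, mul_pow, ENNReal.inv_pow, mul_assoc]
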